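/- Let p₁, …, p_N be symmetric matrix noncommutative polynomials with each p_j(0) invertible, and for each n let 𝒲(n) ⊆ ⋃_j ℑ_{p_j}(n) where ℑ_{p_j}(n) = {X ∈ 𝕊ₙ(ℝ)^g : p_j(X) invertible}. Suppose 𝒲 = (𝒲(n)) respects direct sums and each 𝒲(n) contains 0, is open, and is connected. Then there exists k such that 𝒲 ⊆ 𝒟_{p_k}, where 𝒟_{p_k}(n) is the connected component of 0 in ℑ_{p_k}(n). -/

import Mathlib

open Matrix
open scoped Matrix.Norms.L2Operator

noncomputable section

/-- A `g`-tuple of `n × n` real matrices. -/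
abbrev Tuple (g n : ℕ) := Fin g → Matrix (Fin n) (Fin n) ℝ

/-- Evaluation of a word `w` (of length `k`) in `g` noncommuting letters at the tuple `X`. -/
def wordEval {g n : ℕ} (X : Tuple g n) {k : ℕ} (w : Fin k → Fin g) :
    Matrix (Fin n) (Fin n) ℝ :=
  (List.ofFn fun i => X (w i)).prod

/-- A `δ × δ` matrix noncommutative polynomial in `g` variables of degree at most `d`,
given by its matrix coefficients indexed by words. -/
structure NCPoly (g d δ : ℕ) where
  coeff : ∀ k : ℕ, (Fin k → Fin g) → Matrix (Fin δ) (Fin δ) ℝ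

/-- Evaluation `p(X) = Σ_{|w| ≤ d} p_w ⊗ w(X)`. -/
def NCPoly.eval {g d δ : ℕ} (p : NCPoly g d δ) {n : ℕ} (X : Tuple g n) :
    Matrix (Fin δ × Fin n) (Fin δ × Fin n) ℝ :=
  ∑ k ∈ Finset.range (d + 1), ∑ w : Fin k → Fin g,
    Matrix.kroneckerMap (· * ·) (p.coeff k w) (wordEval X w)

/-- `p(0)`, the constant coefficient of `p`. -/
def NCPoly.constantCoeff {g d δ : ℕ} (p : NCPoly g d δ) : Matrix (Fin δ) (Fin δ) ℝ :=
  p.coeff 0 finZeroElim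

/-- `p` takes symmetric values at tuples of symmetric matrices. -/
def NCPoly.IsSymmPoly {g d δ : ℕ} (p : NCPoly g d δ) : Prop :=
  ∀ (n : ℕ) (X : Tuple g n), (∀ j, (X j).IsSymm) → (p.eval X).IsSymm

/-- The invertibility set `ℑ_p(n)` inside the symmetric tuples. -/
def invSet {g d δ : ℕ} (p : NCPoly g d δ) (n : ℕ) : Set (Tuple g n) :=
  {X | (∀ j, (X j).IsSymm) ∧ IsUnit (p.eval X)}

/-- `𝒟_p(n)`, the connected component of `0` of the invertibility set. -/
def Dset {g d δ : ℕ} (p : NCPoly g d δ) (n : ℕ) : Set (Tuple g n) :=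
  connectedComponentIn (invSet p n) 0

/-- Direct sum of tuples. -/
def dsum {g n m : ℕ} (X : Tuple g n) (Y : Tuple g m) : Tuple g (n + m) :=
  fun j => Matrix.reindex finSumFinEquiv finSumFinEquiv (Matrix.fromBlocks (X j) 0 0 (Y j))


lemma wordEval_dsum {g n m : ℕ} (X : Tuple g n) (Y : Tuple g m) {k : ℕ} (w : Fin k → Fin g) :
    wordEval (dsum X Y) w =
      (Matrix.fromBlocks (wordEval X w) 0 0 (wordEval Y w)).submatrix
        finSumFinEquiv.symm finSumFinEquiv.symm := by
  induction k with
  | zero =>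
    simp [wordEval, Matrix.fromBlocks_one]
  | succ k ih =>
    have h1 : wordEval (dsum X Y) w = (dsum X Y) (w 0) * wordEval (dsum X Y) (w ∘ Fin.succ) := by
      simp [wordEval, List.ofFn_succ, Function.comp]
    have h2 : wordEval X w = X (w 0) * wordEval X (w ∘ Fin.succ) := by
      simp [wordEval, List.ofFn_succ, Function.comp]
    have h3 : wordEval Y w = Y (w 0) * wordEval Y (w ∘ Fin.succ) := by
      simp [wordEval, List.ofFn_succ, Function.comp]
    rw [h1, h2, h3, ih, dsum, Matrix.reindex_apply, Matrix.submatrix_mul_equiv,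
      Matrix.fromBlocks_multiply]
    simp

/-- The equivalence distributing a Kronecker index over a direct-sum index. -/
def dsumEquiv (δ n m : ℕ) :
    Fin δ × Fin (n + m) ≃ (Fin δ × Fin n) ⊕ (Fin δ × Fin m) where
  toFun x := Sum.map (fun i => (x.1, i)) (fun i => (x.1, i)) (finSumFinEquiv.symm x.2)
  invFun := Sum.elim (fun y => (y.1, finSumFinEquiv (Sum.inl y.2)))
    (fun y => (y.1, finSumFinEquiv (Sum.inr y.2)))
  left_inv := by
    rintro ⟨a, i⟩
    rcases h : finSumFinEquiv.symm i with i' | i'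
    · obtain rfl : i = finSumFinEquiv (Sum.inl i') := by rw [← h]; simp
      simp
    · obtain rfl : i = finSumFinEquiv (Sum.inr i') := by rw [← h]; simp
      simp
  right_inv := by rintro (⟨a, i⟩ | ⟨a, i⟩) <;> simp

lemma eval_dsum {g d δ n m : ℕ} (p : NCPoly g d δ) (X : Tuple g n) (Y : Tuple g m) :
    p.eval (dsum X Y) =
      (Matrix.fromBlocks (p.eval X) 0 0 (p.eval Y)).submatrix
        (dsumEquiv δ n m) (dsumEquiv δ n m) := by
  ext ⟨a, i⟩ ⟨b, j⟩
  rcases hi : finSumFinEquiv.symm i with i' | i' <;>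
    rcases hj : finSumFinEquiv.symm j with j' | j' <;>
      simp only [NCPoly.eval, Matrix.sum_apply, Matrix.kroneckerMap_apply, wordEval_dsum,
        Matrix.submatrix_apply, dsumEquiv, Equiv.coe_fn_mk, hi, hj, Sum.map_inl, Sum.map_inr,
        Matrix.fromBlocks_apply₁₁, Matrix.fromBlocks_apply₁₂, Matrix.fromBlocks_apply₂₁,
        Matrix.fromBlocks_apply₂₂, Matrix.zero_apply, mul_zero, Finset.sum_const_zero]

lemma isUnit_eval_dsum_iff {g d δ n m : ℕ} (p : NCPoly g d δ) (X : Tuple g n) (Y : Tuple g m) :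
    IsUnit (p.eval (dsum X Y)) ↔ IsUnit (p.eval X) ∧ IsUnit (p.eval Y) := by
  rw [Matrix.isUnit_iff_isUnit_det, eval_dsum, Matrix.det_submatrix_equiv_self,
    Matrix.det_fromBlocks_zero₂₁, IsUnit.mul_iff, ← Matrix.isUnit_iff_isUnit_det,
    ← Matrix.isUnit_iff_isUnit_det]

lemma exists_big_witness {g : ℕ} (W : ∀ n : ℕ, Set (Tuple g n))
    (hdsum : ∀ n m, ∀ X ∈ W n, ∀ Y ∈ W m, dsum X Y ∈ W (n + m))
    (hzero : ∀ n, (0 : Tuple g n) ∈ W n) :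
    ∀ (M : ℕ) (ns : Fin M → ℕ) (Xs : ∀ i, Tuple g (ns i)), (∀ i, Xs i ∈ W (ns i)) →
      ∃ (m : ℕ) (Z : Tuple g m), Z ∈ W m ∧
        ∀ {d' δ' : ℕ} (q : NCPoly g d' δ'), IsUnit (q.eval Z) →
          ∀ i, IsUnit (q.eval (Xs i)) := by
  intro M
  induction M with
  | zero => exact fun ns Xs _ => ⟨0, 0, hzero 0, fun q _ i => i.elim0⟩
  | succ M ih =>
    intro ns Xs hXs
    obtain ⟨m, Z, hZ, hprop⟩ := ih (fun i => ns i.succ) (fun i => Xs i.succ)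
      (fun i => hXs i.succ)
    refine ⟨ns 0 + m, dsum (Xs 0) Z, hdsum _ _ _ (hXs 0) _ hZ, ?_⟩
    intro d' δ' q hu i
    rw [isUnit_eval_dsum_iff] at hu
    induction i using Fin.cases with
    | zero => exact hu.1
    | succ i => exact hprop q hu.2 i

/-- If `𝒲(n) ⊆ ⋃_j ℑ_{p_j}(n)`, `𝒲` respects direct sums, and each `𝒲(n)` contains `0`, is
open (in the symmetric tuples) and connected, then `𝒲` is contained in a single `𝒟_{p_k}`. -/
theorem graded_union_subset_single_component
    {g d N : ℕ} (δ : Fin N → ℕ) (P : ∀ j : Fin N, NCPoly g d (δ j))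
    (hsym : ∀ j, (P j).IsSymmPoly) (h0 : ∀ j, IsUnit (P j).constantCoeff)
    (W : ∀ n : ℕ, Set (Tuple g n))
    (hsub : ∀ n, W n ⊆ ⋃ j, invSet (P j) n)
    (hdsum : ∀ n m, ∀ X ∈ W n, ∀ Y ∈ W m, dsum X Y ∈ W (n + m))
    (hzero : ∀ n, (0 : Tuple g n) ∈ W n)
    (hopen : ∀ n, IsOpen {X : {X : Tuple g n // ∀ j, (X j).IsSymm} | (X : Tuple g n) ∈ W n})
    (hconn : ∀ n, IsConnected (W n)) :
    ∃ k, ∀ n, W n ⊆ Dset (P k) n := by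
  have key : ∃ k, ∀ n, ∀ X ∈ W n, IsUnit ((P k).eval X) := by
    by_contra hc
    push_neg at hc
    choose ns Xs hmem hnot using hc
    obtain ⟨m, Z, hZ, hprop⟩ := exists_big_witness W hdsum hzero N ns Xs hmem
    obtain ⟨j, hj⟩ := Set.mem_iUnion.mp (hsub m hZ)
    exact hnot j (hprop (P j) hj.2 j)
  obtain ⟨k, hk⟩ := key
  refine ⟨k, fun n => ?_⟩
  have hWinv : W n ⊆ invSet (P k) n := by
    intro X hX
    obtain ⟨j, hj⟩ := Set.mem_iUnion.mp (hsub n hX)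
    exact ⟨hj.1, hk n X hX⟩
  exact (hconn n).isPreconnected.subset_connectedComponentIn (hzero n) hWinv
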